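/- Let G = (V,E) be a D-regular n-vertex graph and v_1, …, v_k ∈ V (not necessarily distinct). Then the vectors φ(1,v_1), …, φ(k,v_k) given by the edge-indicator embedding form a (k, D(k-1), t)-collection with t = |E(v_1,…,v_k)|: each vector has exactly D(k-1) nonzero entries, exactly t pairs of vectors share exactly one nonzero entry (inner product 1), the remaining C(k,2) - t pairs have disjoint supports (inner product 0), and every coordinate is nonzero in at most two of the vectors. -/

import Mathlib

/-- Index set for the coordinates of the edge-indicator embedding:
    tuples (ℓ, u, ℓ', u') with ℓ < ℓ' in [k] and u, u' vertices. -/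
abbrev EmbIdx (k : ℕ) (V : Type*) := {σ : Fin k × V × Fin k × V // σ.1 < σ.2.2.1}

/-- The edge-indicator embedding φ : [k] × V → {0,1}^d of a graph G, with
    [φ(i,v)]_{(ℓ,u,ℓ',u')} = 1 iff (u,u') ∈ E and ((ℓ,u) = (i,v) or (ℓ',u') = (i,v)). -/
def Emb {V : Type*} (G : SimpleGraph V) [DecidableRel G.Adj] [DecidableEq V]
    (k : ℕ) (i : Fin k) (v : V) : EmbIdx k V → ℝ :=
  fun σ =>
    if G.Adj σ.1.2.1 σ.1.2.2.2 ∧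
        ((σ.1.1, σ.1.2.1) = (i, v) ∨ (σ.1.2.2.1, σ.1.2.2.2) = (i, v)) then 1 else 0


open scoped Classical

/-- A (k,s,t)-collection: k vectors in {0,1}^ι such that each has exactly s nonzero
    entries, exactly t pairs share exactly one nonzero entry (inner product 1), the
    other C(k,2) - t pairs have disjoint supports (inner product 0), and every
    coordinate is nonzero in at most two of the vectors. -/
noncomputable def IsKSTCollection {ι : Type*} [Fintype ι] {k : ℕ}
    (x : Fin k → ι → ℝ) (s t : ℕ) : Prop :=
  (∀ i, (Finset.univ.filter (fun j : ι => x i j ≠ 0)).card = s) ∧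
  (Finset.univ.filter (fun pr : Fin k × Fin k =>
      pr.1 < pr.2 ∧ ∑ j, x pr.1 j * x pr.2 j = 1)).card = t ∧
  (Finset.univ.filter (fun pr : Fin k × Fin k =>
      pr.1 < pr.2 ∧ ∑ j, x pr.1 j * x pr.2 j = 0)).card = k.choose 2 - t ∧
  (∀ j : ι, (Finset.univ.filter (fun i : Fin k => x i j ≠ 0)).card ≤ 2)

lemma emb_ne_zero_iff {V : Type*} (G : SimpleGraph V) [DecidableRel G.Adj] [DecidableEq V]
    {k : ℕ} (i : Fin k) (w : V) (σ : EmbIdx k V) :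
    Emb G k i w σ ≠ 0 ↔
      G.Adj σ.1.2.1 σ.1.2.2.2 ∧
        ((σ.1.1, σ.1.2.1) = (i, w) ∨ (σ.1.2.2.1, σ.1.2.2.2) = (i, w)) := by
  unfold Emb
  split <;> simp_all

lemma emb_support_card {V : Type*} [Fintype V] [DecidableEq V] (G : SimpleGraph V)
    [DecidableRel G.Adj] {D k : ℕ} (hreg : G.IsRegularOfDegree D) (i : Fin k) (w : V) :
    (Finset.univ.filter (fun σ : EmbIdx k V => Emb G k i w σ ≠ 0)).card = D * (k - 1) := by
  classical
  have hcard : (Finset.univ.filter (fun σ : EmbIdx k V => Emb G k i w σ ≠ 0)).card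
      = ((G.neighborFinset w) ×ˢ (Finset.univ.erase i)).card := by
    refine Finset.card_bij'
      (fun σ _ => if (σ.1.1, σ.1.2.1) = (i, w) then (σ.1.2.2.2, σ.1.2.2.1)
        else (σ.1.2.1, σ.1.1))
      (fun a ha => if h : i < a.2 then ⟨(i, w, a.2, a.1), h⟩
        else ⟨(a.2, a.1, i, w), lt_of_le_of_ne (not_lt.1 h)
          (Finset.ne_of_mem_erase (Finset.mem_product.1 ha).2)⟩) ?_ ?_ ?_ ?_
    · rintro ⟨⟨ℓ, u, ℓ', u'⟩, hlt⟩ hσ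
      rw [Finset.mem_filter] at hσ
      obtain ⟨-, hσ⟩ := hσ
      rw [emb_ne_zero_iff] at hσ
      obtain ⟨hadj, hor⟩ := hσ
      simp only at hadj hor hlt
      dsimp only
      by_cases h1 : ((ℓ, u) : Fin k × V) = (i, w)
      · rw [if_pos h1]
        obtain ⟨hℓ, hu⟩ : ℓ = i ∧ u = w := by simpa [Prod.ext_iff] using h1
        refine Finset.mem_product.2 ⟨?_, Finset.mem_erase.2 ⟨?_, Finset.mem_univ _⟩⟩
        · rw [SimpleGraph.mem_neighborFinset, ← hu]; exact hadj
        · rw [← hℓ]; exact hlt.ne'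
      · rw [if_neg h1]
        rcases hor with hor | hor
        · exact absurd hor h1
        · obtain ⟨hℓ, hu⟩ : ℓ' = i ∧ u' = w := by simpa [Prod.ext_iff] using hor
          refine Finset.mem_product.2 ⟨?_, Finset.mem_erase.2 ⟨?_, Finset.mem_univ _⟩⟩
          · rw [SimpleGraph.mem_neighborFinset, ← hu]; exact hadj.symm
          · rw [← hℓ]; exact hlt.ne
    · rintro ⟨u', j⟩ ha
      have ha' := Finset.mem_product.1 ha
      obtain ⟨hu', hj⟩ := ha'
      rw [SimpleGraph.mem_neighborFinset] at hu'
      rw [Finset.mem_filter]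
      refine ⟨Finset.mem_univ _, ?_⟩
      dsimp only
      by_cases h : i < j
      · rw [dif_pos h, emb_ne_zero_iff]
        exact ⟨hu', Or.inl rfl⟩
      · rw [dif_neg h, emb_ne_zero_iff]
        exact ⟨hu'.symm, Or.inr rfl⟩
    · rintro ⟨⟨ℓ, u, ℓ', u'⟩, hlt⟩ hσ
      rw [Finset.mem_filter] at hσ
      obtain ⟨-, hσ⟩ := hσ
      rw [emb_ne_zero_iff] at hσ
      obtain ⟨hadj, hor⟩ := hσ
      simp only at hor hlt
      dsimp only
      by_cases h1 : ((ℓ, u) : Fin k × V) = (i, w)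
      · obtain ⟨hℓ, hu⟩ : ℓ = i ∧ u = w := by simpa [Prod.ext_iff] using h1
        subst hℓ; subst hu
        simp [hlt]
      · rcases hor with hor | hor
        · exact absurd hor h1
        · obtain ⟨hℓ, hu⟩ : ℓ' = i ∧ u' = w := by simpa [Prod.ext_iff] using hor
          subst hℓ; subst hu
          have hnl : ¬ ℓ' < ℓ := not_lt.2 hlt.le
          simp [h1, hnl]
    · rintro ⟨u', j⟩ ha
      have hj : j ≠ i := Finset.ne_of_mem_erase (Finset.mem_product.1 ha).2
      dsimp only
      by_cases h : i < j
      · simp [h]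
      · have : ((j, u') : Fin k × V) ≠ (i, w) := by simp [Prod.ext_iff, hj]
        simp [h, this]
  rw [hcard, Finset.card_product, SimpleGraph.card_neighborFinset_eq_degree, hreg w,
    Finset.card_erase_of_mem (Finset.mem_univ _), Finset.card_univ, Fintype.card_fin]

lemma emb_inner {V : Type*} [Fintype V] [DecidableEq V] (G : SimpleGraph V)
    [DecidableRel G.Adj] {k : ℕ} {i j : Fin k} (hij : i < j) (a b : V) :
    ∑ σ : EmbIdx k V, Emb G k i a σ * Emb G k j b σ
      = if G.Adj a b then (1 : ℝ) else 0 := by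
  classical
  have key : ∀ σ : EmbIdx k V, Emb G k i a σ * Emb G k j b σ
      = if σ = (⟨(i, a, j, b), hij⟩ : EmbIdx k V) ∧ G.Adj a b then (1 : ℝ) else 0 := by
    rintro ⟨⟨ℓ, u, ℓ', u'⟩, hlt⟩
    by_cases hC : (⟨(ℓ, u, ℓ', u'), hlt⟩ : EmbIdx k V) = ⟨(i, a, j, b), hij⟩ ∧ G.Adj a b
    · obtain ⟨hσ, hadj⟩ := hC
      obtain ⟨h1, h2, h3, h4⟩ : ℓ = i ∧ u = a ∧ ℓ' = j ∧ u' = b := by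
        simpa [Prod.ext_iff] using congrArg Subtype.val hσ
      subst h1; subst h2; subst h3; subst h4
      unfold Emb
      simp [hadj]
    · rw [if_neg hC]
      unfold Emb
      dsimp only
      by_cases h1 : G.Adj u u' ∧ ((ℓ, u) = (i, a) ∨ (ℓ', u') = (i, a))
      · by_cases h2 : G.Adj u u' ∧ ((ℓ, u) = (j, b) ∨ (ℓ', u') = (j, b))
        · exfalso
          obtain ⟨hadj, hor1⟩ := h1
          obtain ⟨-, hor2⟩ := h2
          simp only at hlt
          rcases hor1 with h1' | h1' <;> rcases hor2 with h2' | h2'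
          · exact hij.ne (congrArg Prod.fst (h1'.symm.trans h2'))
          · obtain ⟨hℓ, hu⟩ : ℓ = i ∧ u = a := by simpa [Prod.ext_iff] using h1'
            obtain ⟨hℓ', hu'⟩ : ℓ' = j ∧ u' = b := by simpa [Prod.ext_iff] using h2'
            refine hC ⟨Subtype.ext ?_, by rwa [hu, hu'] at hadj⟩
            simp [Prod.ext_iff, hℓ, hu, hℓ', hu']
          · have hℓj : ℓ = j := (Prod.ext_iff.1 h2').1
            have hℓ'i : ℓ' = i := (Prod.ext_iff.1 h1').1
            exact absurd hij (by rw [← hℓ'i, ← hℓj]; exact hlt.asymm)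
          · exact hij.ne (congrArg Prod.fst (h1'.symm.trans h2'))
        · rw [if_neg h2, mul_zero]
      · rw [if_neg h1, zero_mul]
  rw [Finset.sum_congr rfl fun σ _ => key σ]
  by_cases hadj : G.Adj a b
  · simp [hadj]
  · simp [hadj]


lemma card_lt_pairs (k : ℕ) :
    (Finset.univ.filter (fun pr : Fin k × Fin k => pr.1 < pr.2)).card = k.choose 2 := by
  classical
  rw [Nat.choose_two_right, ← Finset.sum_range_id, Finset.card_filter,
    Fintype.sum_prod_type_right]
  rw [← Fin.sum_univ_eq_sum_range (fun r => r) k]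
  refine Finset.sum_congr rfl fun b _ => ?_
  rw [← Finset.card_filter]
  have : Finset.univ.filter (fun a : Fin k => a < b) = Finset.Iio b := by
    ext a; simp
  rw [this, Fin.card_Iio]

/-- For a D-regular n-vertex graph G and vertices v₁, …, v_k (not necessarily distinct),
    the embedded vectors φ(1,v₁), …, φ(k,v_k) form a (k, D(k-1), |E(v₁,…,v_k)|)-collection. -/
theorem stmt10 {V : Type*} [Fintype V] [DecidableEq V] (G : SimpleGraph V)
    [DecidableRel G.Adj] (n D k : ℕ) (hn : Fintype.card V = n)
    (hreg : G.IsRegularOfDegree D) (hk : 0 < k) (v : Fin k → V) :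
    IsKSTCollection (fun i => Emb G k i (v i)) (D * (k - 1))
      (∑ pr ∈ Finset.univ.filter (fun pr : Fin k × Fin k => pr.1 < pr.2),
        (if G.Adj (v pr.1) (v pr.2) then (1 : ℕ) else 0)) := by
  classical
  have hfilter1 : (Finset.univ.filter fun pr : Fin k × Fin k =>
        pr.1 < pr.2 ∧ ∑ σ, Emb G k pr.1 (v pr.1) σ * Emb G k pr.2 (v pr.2) σ = 1)
      = Finset.univ.filter fun pr : Fin k × Fin k =>
        pr.1 < pr.2 ∧ G.Adj (v pr.1) (v pr.2) := by
    refine Finset.filter_congr fun pr _ => and_congr_right fun hlt => ?_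
    rw [emb_inner G hlt]
    split_ifs with h <;> simp [h]
  have hfilter0 : (Finset.univ.filter fun pr : Fin k × Fin k =>
        pr.1 < pr.2 ∧ ∑ σ, Emb G k pr.1 (v pr.1) σ * Emb G k pr.2 (v pr.2) σ = 0)
      = Finset.univ.filter fun pr : Fin k × Fin k =>
        pr.1 < pr.2 ∧ ¬ G.Adj (v pr.1) (v pr.2) := by
    refine Finset.filter_congr fun pr _ => and_congr_right fun hlt => ?_
    rw [emb_inner G hlt]
    split_ifs with h <;> simp [h]
  have ht : (∑ pr ∈ Finset.univ.filter (fun pr : Fin k × Fin k => pr.1 < pr.2),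
        (if G.Adj (v pr.1) (v pr.2) then (1 : ℕ) else 0))
      = (Finset.univ.filter fun pr : Fin k × Fin k =>
          pr.1 < pr.2 ∧ G.Adj (v pr.1) (v pr.2)).card := by
    rw [Finset.card_filter, Finset.sum_filter]
    refine Finset.sum_congr rfl fun pr _ => ?_
    rw [ite_and]
  have hsplit := Finset.card_filter_add_card_filter_not
    (s := Finset.univ.filter fun pr : Fin k × Fin k => pr.1 < pr.2)
    (p := fun pr => G.Adj (v pr.1) (v pr.2))
  rw [Finset.filter_filter, Finset.filter_filter, card_lt_pairs] at hsplit
  refine ⟨fun i => emb_support_card G hreg i (v i), ?_, ?_, ?_⟩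
  · rw [hfilter1, ht]
  · rw [hfilter0, ht]
    omega
  · rintro ⟨⟨ℓ, u, ℓ', u'⟩, hlt⟩
    have hsub : (Finset.univ.filter fun i : Fin k =>
        Emb G k i (v i) ⟨(ℓ, u, ℓ', u'), hlt⟩ ≠ 0) ⊆ {ℓ, ℓ'} := by
      intro i hi
      rw [Finset.mem_filter, emb_ne_zero_iff] at hi
      rcases hi.2.2 with h | h
      · exact Finset.mem_insert.2 (Or.inl ((Prod.ext_iff.1 h).1).symm)
      · exact Finset.mem_insert.2 (Or.inr (Finset.mem_singleton.2
          ((Prod.ext_iff.1 h).1).symm))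
    refine (Finset.card_le_card hsub).trans ?_
    refine (Finset.card_insert_le _ _).trans ?_
    simp
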